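/- Let (V, E, s, t) be a finite directed multigraph with V nonempty whose underlying undirected graph is connected, let n ≥ 1, let u : E → ℚ^n, set g := #E − #V + 1, and let W := {a : E → ℚ | for every c ∈ ker ∂, ∑_{e ∈ E} (c e)·(a e) • (u e) = 0 in ℚ^n}. If there exists a nonzero c₀ ∈ ker ∂ such that the linear span of {u e | c₀ e ≠ 0} is a proper subspace of ℚ^n, then codim W < n·g, where codim W is the codimension of W in (E → ℚ). In particular, if some edge e is self-adjacent (s e = t e) and u e = 0, then codim W < n·g (the indicator function of e lies in ker ∂ and its associated directions span the zero subspace). -/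

import Mathlib

open scoped Classical

/-- The underlying undirected graph of the directed multigraph `(V, E, s, t)` is connected:
any two vertices are joined by a chain of edges traversed in either direction. -/
def GraphConnected {V E : Type*} (s t : E → V) : Prop :=
  ∀ v w : V, Relation.ReflTransGen
    (fun x y => ∃ e, s e = x ∧ t e = y ∨ s e = y ∧ t e = x) v w

/-- The boundary map `∂ : (E → ℚ) → (V → ℚ)`,
`(∂ a) v = (∑ edges ending at v) − (∑ edges starting at v)`. -/
noncomputable def boundaryMap {V E : Type*} [Fintype E] (s t : E → V) :
    (E → ℚ) →ₗ[ℚ] (V → ℚ) where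
  toFun a := fun v => (∑ e ∈ Finset.univ.filter fun e => t e = v, a e)
      - (∑ e ∈ Finset.univ.filter fun e => s e = v, a e)
  map_add' a b := by
    funext v
    simp only [Pi.add_apply, Finset.sum_add_distrib]
    ring
  map_smul' c a := by
    funext v
    simp only [Pi.smul_apply, smul_eq_mul, ← Finset.mul_sum, RingHom.id_apply]
    ring

/-- For a fixed cycle `c`, the linear map `a ↦ ∑ e, (c e * a e) • u e`. -/
noncomputable def cyclePairing {E : Type*} [Fintype E] {n : ℕ} (u : E → Fin n → ℚ)
    (c : E → ℚ) : (E → ℚ) →ₗ[ℚ] (Fin n → ℚ) where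
  toFun a := ∑ e : E, (c e * a e) • u e
  map_add' a b := by
    simp [mul_add, add_smul, Finset.sum_add_distrib]
  map_smul' r a := by
    simp [Finset.smul_sum, smul_smul, mul_left_comm]

/-- The subspace `W = {a : E → ℚ | ∀ c ∈ ker ∂, ∑ e, (c e * a e) • u e = 0}`. -/
noncomputable def Wsub {V E : Type*} [Fintype E] {n : ℕ} (s t : E → V)
    (u : E → Fin n → ℚ) : Submodule ℚ (E → ℚ) :=
  ⨅ c ∈ LinearMap.ker (boundaryMap s t), LinearMap.ker (cyclePairing u c)

/-- Lemma 2.6: non-spanning loops give superabundance.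
If some nonzero rational cycle `c₀` has all its edge directions contained in a proper subspace
of `ℚⁿ`, then `codim W < n·g`; in particular this holds if some edge is self-adjacent with
direction `0`. Here `g = #E − #V + 1` is the first Betti number. -/
-- indicator edge function
lemma boundary_indic {V E : Type*} [Fintype E] (s t : E → V) (e : E) :
    boundaryMap s t (fun e' => if e' = e then 1 else 0)
      = (Pi.single (t e) 1 - Pi.single (s e) 1 : V → ℚ) := by
  funext v
  simp [boundaryMap, Finset.sum_ite_eq', Pi.single_apply, eq_comm]

lemma diff_mem_range {V E : Type*} [Fintype E] (s t : E → V) {v w : V}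
    (h : Relation.ReflTransGen
      (fun x y => ∃ e, s e = x ∧ t e = y ∨ s e = y ∧ t e = x) v w) :
    (Pi.single w 1 - Pi.single v 1 : V → ℚ) ∈ LinearMap.range (boundaryMap s t) := by
  induction h with
  | refl => simp
  | @tail b c hab hbc ih =>
    obtain ⟨e, he | he⟩ := hbc
    · have : (Pi.single c 1 - Pi.single v 1 : V → ℚ)
          = (Pi.single b 1 - Pi.single v 1) + (Pi.single (t e) 1 - Pi.single (s e) 1) := by
        rw [he.1, he.2]; ring
      rw [this]
      exact add_mem ih ⟨_, boundary_indic s t e⟩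
    · have : (Pi.single c 1 - Pi.single v 1 : V → ℚ)
          = (Pi.single b 1 - Pi.single v 1) - (Pi.single (t e) 1 - Pi.single (s e) 1) := by
        rw [he.1, he.2]; ring
      rw [this]
      exact sub_mem ih ⟨_, boundary_indic s t e⟩

lemma card_le_rank_boundary {V E : Type*} [Fintype V] [Fintype E] [Nonempty V]
    (s t : E → V) (hconn : GraphConnected s t) :
    Fintype.card V ≤ Module.finrank ℚ (LinearMap.range (boundaryMap s t)) + 1 := by
  obtain ⟨v₀⟩ := ‹Nonempty V›
  set R := LinearMap.range (boundaryMap s t)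
  have htop : R ⊔ Submodule.span ℚ {(Pi.single v₀ 1 : V → ℚ)} = ⊤ := by
    rw [eq_top_iff]
    intro f _
    have hf : f = ∑ v : V, f v • (Pi.single v 1 : V → ℚ) := by
      funext w
      simp [Pi.single_apply]
    rw [hf]
    refine Submodule.sum_mem _ fun v _ => Submodule.smul_mem _ _ ?_
    have : (Pi.single v 1 : V → ℚ)
        = (Pi.single v 1 - Pi.single v₀ 1) + Pi.single v₀ 1 := by ring
    rw [this]
    exact add_mem
      (Submodule.mem_sup_left (diff_mem_range s t (hconn v₀ v)))
      (Submodule.mem_sup_right (Submodule.subset_span rfl))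
  have h1 : Module.finrank ℚ (Submodule.span ℚ {(Pi.single v₀ 1 : V → ℚ)}) = 1 :=
    finrank_span_singleton (by simp [Pi.single_apply, funext_iff])
  have h2 := Submodule.finrank_sup_add_finrank_inf_eq R
    (Submodule.span ℚ {(Pi.single v₀ 1 : V → ℚ)})
  rw [htop, h1] at h2
  have h3 : Module.finrank ℚ (⊤ : Submodule ℚ (V → ℚ)) = Fintype.card V := by
    simp [Module.finrank_pi]
  omega

noncomputable def PsiMap {V E : Type*} [Fintype E] {n : ℕ} (s t : E → V)
    (u : E → Fin n → ℚ) :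
    (E → ℚ) →ₗ[ℚ] (↥(LinearMap.ker (boundaryMap s t)) →ₗ[ℚ] (Fin n → ℚ)) where
  toFun a :=
    { toFun := fun c => cyclePairing u c.1 a
      map_add' := fun c c' => by
        simp [cyclePairing, add_mul, add_smul, Finset.sum_add_distrib]
      map_smul' := fun r c => by
        simp [cyclePairing, Finset.smul_sum, smul_smul, mul_assoc] }
  map_add' a b := by
    ext c
    simp; rfl
  map_smul' r a := by
    ext c
    simp; exact Or.inl rfl

lemma ker_Psi {V E : Type*} [Fintype E] {n : ℕ} (s t : E → V) (u : E → Fin n → ℚ) :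
    LinearMap.ker (PsiMap s t u) = Wsub s t u := by
  ext a
  simp only [Wsub, Submodule.mem_iInf, LinearMap.mem_ker]
  constructor
  · intro h c hc
    have := congrArg (fun φ => φ ⟨c, hc⟩) h
    exact this
  · intro h
    refine LinearMap.ext fun c => ?_
    exact h c.1 c.2

theorem statement_3 {V E : Type*} [Fintype V] [Fintype E] [Nonempty V]
    (s t : E → V) (hconn : GraphConnected s t) {n : ℕ} (hn : 1 ≤ n)
    (u : E → Fin n → ℚ) (g : ℕ) (hg : g + Fintype.card V = Fintype.card E + 1) :
    ((∃ c₀ ∈ LinearMap.ker (boundaryMap s t), c₀ ≠ 0 ∧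
        Submodule.span ℚ (u '' {e | c₀ e ≠ 0}) ≠ ⊤) →
      Fintype.card E - Module.finrank ℚ (Wsub s t u) < n * g) ∧
    ((∃ e, s e = t e ∧ u e = 0) →
      Fintype.card E - Module.finrank ℚ (Wsub s t u) < n * g) := by
  have main : (∃ c₀ ∈ LinearMap.ker (boundaryMap s t), c₀ ≠ 0 ∧
        Submodule.span ℚ (u '' {e | c₀ e ≠ 0}) ≠ ⊤) →
      Fintype.card E - Module.finrank ℚ (Wsub s t u) < n * g := by
    rintro ⟨c₀, hc₀mem, hc₀ne, hUne⟩
    set U := Submodule.span ℚ (u '' {e | c₀ e ≠ 0}) with hU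
    set c₀K : ↥(LinearMap.ker (boundaryMap s t)) := ⟨c₀, hc₀mem⟩ with hc₀K
    have hc₀Kne : c₀K ≠ 0 := by
      simp only [hc₀K, ne_eq, Submodule.mk_eq_zero]
      exact hc₀ne
    -- finrank K ≤ g
    have hrn := LinearMap.finrank_range_add_finrank_ker (boundaryMap s t)
    have hE : Module.finrank ℚ (E → ℚ) = Fintype.card E := Module.finrank_pi ℚ
    have hVle := card_le_rank_boundary s t hconn
    have hKle : Module.finrank ℚ (LinearMap.ker (boundaryMap s t)) ≤ g := by omega
    -- range of Psi lands in S
    have hrange : LinearMap.range (PsiMap s t u) ≤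
        Submodule.comap (LinearMap.applyₗ c₀K) U := by
      rintro φ ⟨a, rfl⟩
      rw [Submodule.mem_comap]
      show cyclePairing u c₀ a ∈ U
      refine Submodule.sum_mem _ fun e _ => ?_
      by_cases h : c₀ e = 0
      · simp [h]
      · exact Submodule.smul_mem _ _ (Submodule.subset_span ⟨e, h, rfl⟩)
    -- S is proper
    have hSproper : Submodule.comap (LinearMap.applyₗ c₀K) U ≠ ⊤ := by
      obtain ⟨x, hx⟩ : ∃ x : Fin n → ℚ, x ∉ U := by
        by_contra hx
        push_neg at hx
        exact hUne (eq_top_iff.2 fun y _ => hx y)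
      -- build φ : K →ₗ ℚⁿ with φ c₀K = x
      obtain ⟨f, hf⟩ := LinearMap.exists_extend
        ((LinearMap.toSpanSingleton ℚ (Fin n → ℚ) x).comp
          (LinearEquiv.toSpanNonzeroSingleton ℚ (↥(LinearMap.ker (boundaryMap s t))) c₀K hc₀Kne).symm.toLinearMap)
      intro hStop
      have hφ : f c₀K = x := by
        have h1 := congrArg
          (fun ψ => ψ ((LinearEquiv.toSpanNonzeroSingleton ℚ
            (↥(LinearMap.ker (boundaryMap s t))) c₀K hc₀Kne) 1)) hf
        have hsym := LinearEquiv.coord_self ℚ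
          (↥(LinearMap.ker (boundaryMap s t))) c₀K hc₀Kne
        simpa [hsym] using h1
      have hmem : f ∈ Submodule.comap (LinearMap.applyₗ c₀K) U := hStop ▸ Submodule.mem_top
      rw [Submodule.mem_comap] at hmem
      have hmem' : f c₀K ∈ U := hmem
      rw [hφ] at hmem'
      exact hx hmem'
    -- rank of Psi < finrank K * n ≤ g * n
    have hrankPsi : Module.finrank ℚ (LinearMap.range (PsiMap s t u)) <
        Module.finrank ℚ (LinearMap.ker (boundaryMap s t)) * n := by
      have h1 : Module.finrank ℚ (LinearMap.range (PsiMap s t u)) ≤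
          Module.finrank ℚ (Submodule.comap (LinearMap.applyₗ c₀K) U) :=
        Submodule.finrank_mono hrange
      have h2 : Module.finrank ℚ (Submodule.comap (LinearMap.applyₗ c₀K) U) <
          Module.finrank ℚ ((↥(LinearMap.ker (boundaryMap s t))) →ₗ[ℚ] (Fin n → ℚ)) :=
        Submodule.finrank_lt hSproper
      have h3 : Module.finrank ℚ ((↥(LinearMap.ker (boundaryMap s t))) →ₗ[ℚ] (Fin n → ℚ)) =
          Module.finrank ℚ (LinearMap.ker (boundaryMap s t)) * n := by
        rw [Module.finrank_linearMap]
        simp [Module.finrank_pi]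
      omega
    have hrk := LinearMap.finrank_range_add_finrank_ker (PsiMap s t u)
    rw [ker_Psi] at hrk
    have : Module.finrank ℚ (LinearMap.ker (boundaryMap s t)) * n ≤ g * n :=
      Nat.mul_le_mul_right n hKle
    have hmul : g * n = n * g := Nat.mul_comm g n
    omega
  refine ⟨main, fun ⟨e, hst, hue⟩ => main ?_⟩
  refine ⟨(fun e' => if e' = e then 1 else 0), ?_, ?_, ?_⟩
  · rw [LinearMap.mem_ker, boundary_indic, hst]
    simp
  · intro h
    have := congrFun h e
    simp at this
  · have : {e' | (if e' = e then (1:ℚ) else 0) ≠ 0} = {e} := by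
      ext e'
      by_cases h : e' = e <;> simp [h]
    rw [this]
    intro htop
    have h1 : Submodule.span ℚ (u '' {e}) = ⊥ := by
      simp [hue]
    rw [h1] at htop
    have : (0:ℕ) < n := hn
    have hbot : (⊥ : Submodule ℚ (Fin n → ℚ)) ≠ ⊤ := by
      intro hbt
      have : Module.finrank ℚ (⊥ : Submodule ℚ (Fin n → ℚ)) =
          Module.finrank ℚ (⊤ : Submodule ℚ (Fin n → ℚ)) := by rw [hbt]
      simp [Module.finrank_pi] at this
      omega
    exact hbot htop
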